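/- Let a be a real number, λ > 0, and let f be Lebesgue integrable on [a, a+ε] for some ε > 0 and right-continuous at a. Then lim_{x→a⁺} Γ(λ+1) · (I_a^λ f)(x) / (x−a)^λ = f(a); in particular (I_a^λ f)(x) → 0 as x → a⁺. -/

import Mathlib

open MeasureTheory Filter

/-- **Asymptotics of the Riemann–Liouville integral at the base point.**
If `λ > 0` and `f` is Lebesgue integrable on `[a, a+ε]` for some `ε > 0` and
right-continuous at `a`, then
`Γ(λ+1) · (I_a^λ f)(x) / (x−a)^λ → f(a)` as `x → a⁺`, and in particular
`(I_a^λ f)(x) → 0` as `x → a⁺`. -/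
theorem riemannLiouville_integral_tendsto_base (a lam ε : ℝ) (f : ℝ → ℝ)
    (hlam : 0 < lam) (hε : 0 < ε)
    (hint : IntegrableOn f (Set.Icc a (a + ε)))
    (hcont : ContinuousWithinAt f (Set.Ici a) a) :
    Tendsto (fun x =>
        Real.Gamma (lam + 1) *
          ((1 / Real.Gamma lam) * ∫ y in a..x, (x - y) ^ (lam - 1) * f y) / (x - a) ^ lam)
      (nhdsWithin a (Set.Ioi a)) (nhds (f a)) ∧
    Tendsto (fun x => (1 / Real.Gamma lam) * ∫ y in a..x, (x - y) ^ (lam - 1) * f y)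
      (nhdsWithin a (Set.Ioi a)) (nhds 0) := by
  have hΓlam : (0:ℝ) < Real.Gamma lam := Real.Gamma_pos_of_pos hlam
  have hΓ1 : (0:ℝ) < Real.Gamma (lam + 1) := Real.Gamma_pos_of_pos (by linarith)
  have hΓeq : Real.Gamma (lam + 1) = lam * Real.Gamma lam := Real.Gamma_add_one (ne_of_gt hlam)
  -- kernel integrability
  have hK : ∀ x : ℝ, IntervalIntegrable (fun y => (x - y) ^ (lam - 1)) volume a x := by
    intro x
    have h := ((intervalIntegral.intervalIntegrable_rpow' (a := 0) (b := x - a) (r := lam - 1)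
      (by linarith)).comp_sub_left x).symm
    simpa using h
  -- kernel integral value
  have hKint : ∀ x : ℝ, a < x →
      ∫ y in a..x, (x - y) ^ (lam - 1) = (x - a) ^ lam / lam := by
    intro x hx
    rw [intervalIntegral.integral_comp_sub_left (fun t => t ^ (lam - 1)) x]
    simp only [sub_self, sub_sub_cancel]
    rw [integral_rpow (Or.inl (by linarith))]
    rw [Real.zero_rpow (by linarith), sub_add_cancel]
    ring_nf
  have h1 : Tendsto (fun x =>
        Real.Gamma (lam + 1) *
          ((1 / Real.Gamma lam) * ∫ y in a..x, (x - y) ^ (lam - 1) * f y) / (x - a) ^ lam)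
      (nhdsWithin a (Set.Ioi a)) (nhds (f a)) := by
    rw [Metric.tendsto_nhdsWithin_nhds]
    intro δ hδ
    obtain ⟨η₁, hη₁, hfc⟩ := Metric.continuousWithinAt_iff.mp hcont (δ/2) (by linarith)
    refine ⟨min η₁ ε, by positivity, fun x hx hxd => ?_⟩
    simp only [Set.mem_Ioi] at hx
    rw [Real.dist_eq] at hxd
    have hxa : x - a < min η₁ ε := by
      rwa [abs_of_pos (by linarith)] at hxd
    have hxη₁ : x - a < η₁ := lt_of_lt_of_le hxa (min_le_left _ _)
    have hxε : x ≤ a + ε := by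
      have := lt_of_lt_of_le hxa (min_le_right _ _); linarith
    have hp : (0:ℝ) < (x - a) ^ lam := Real.rpow_pos_of_pos (by linarith) _
    -- bound on f on Ioc a x
    have hfb : ∀ y ∈ Set.Ioc a x, |f y - f a| ≤ δ / 2 := by
      intro y hy
      have h1 : y ∈ Set.Ici a := le_of_lt hy.1
      have h2 : dist y a < η₁ := by
        rw [Real.dist_eq, abs_of_nonneg (by linarith [hy.1])]
        linarith [hy.2]
      exact le_of_lt (hfc h1 h2)
    -- integrability of f on Ioc a x
    have hfint : IntegrableOn f (Set.Ioc a x) := by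
      refine hint.mono_set fun y hy => ?_
      exact ⟨le_of_lt hy.1, le_trans hy.2 hxε⟩
    -- integrability of K * f
    have hKf : IntervalIntegrable (fun y => (x - y) ^ (lam - 1) * f y) volume a x := by
      rw [intervalIntegrable_iff_integrableOn_Ioc_of_le (le_of_lt hx)]
      have hb : ∀ᵐ y ∂volume.restrict (Set.Ioc a x), ‖f y‖ ≤ |f a| + δ / 2 := by
        rw [ae_restrict_iff' measurableSet_Ioc]
        refine Eventually.of_forall fun y hy => ?_
        have := hfb y hy
        rw [Real.norm_eq_abs]
        calc |f y| = |f a + (f y - f a)| := by ring_nf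
          _ ≤ |f a| + |f y - f a| := abs_add_le _ _
          _ ≤ |f a| + δ / 2 := by linarith
      have hKIoc : IntegrableOn (fun y => (x - y) ^ (lam - 1)) (Set.Ioc a x) := by
        have := (hK x)
        rwa [intervalIntegrable_iff_integrableOn_Ioc_of_le (le_of_lt hx)] at this
      have := Integrable.bdd_mul (c := |f a| + δ / 2) hKIoc hfint.aestronglyMeasurable hb
      exact this.congr (Eventually.of_forall fun y => mul_comm _ _)
    -- split
    set I := ∫ y in a..x, (x - y) ^ (lam - 1) * f y with hI
    set J := ∫ y in a..x, (x - y) ^ (lam - 1) * (f y - f a) with hJ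
    have hsplit : J = I - f a * ((x - a) ^ lam / lam) := by
      have heq : (fun y => (x - y) ^ (lam - 1) * (f y - f a))
          = fun y => (x - y) ^ (lam - 1) * f y - (x - y) ^ (lam - 1) * f a := by
        funext y; ring
      rw [hJ, heq, intervalIntegral.integral_sub hKf ((hK x).mul_const _),
        intervalIntegral.integral_mul_const, hKint x hx]
      ring
    -- bound on J
    have hJb : |J| ≤ δ / 2 * ((x - a) ^ lam / lam) := by
      have hb : ∀ᵐ y ∂volume.restrict (Set.uIoc a x),
          ‖(x - y) ^ (lam - 1) * (f y - f a)‖ ≤ δ / 2 * (x - y) ^ (lam - 1) := by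
        rw [Set.uIoc_of_le (le_of_lt hx), ae_restrict_iff' measurableSet_Ioc]
        refine Eventually.of_forall fun y hy => ?_
        have hKnn : (0:ℝ) ≤ (x - y) ^ (lam - 1) :=
          Real.rpow_nonneg (by linarith [hy.2]) _
        rw [Real.norm_eq_abs, abs_mul, abs_of_nonneg hKnn]
        rw [mul_comm (δ / 2)]
        exact mul_le_mul_of_nonneg_left (hfb y hy) hKnn
      have := intervalIntegral.norm_integral_le_abs_of_norm_le hb ((hK x).const_mul (δ / 2))
      rw [intervalIntegral.integral_const_mul, hKint x hx] at this
      calc |J| ≤ |δ / 2 * ((x - a) ^ lam / lam)| := this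
        _ = δ / 2 * ((x - a) ^ lam / lam) := abs_of_nonneg (by positivity)
    -- final estimate
    have hmain : Real.Gamma (lam + 1) * ((1 / Real.Gamma lam) * I) / (x - a) ^ lam - f a
        = lam * J / (x - a) ^ lam := by
      rw [hΓeq, hsplit]
      field_simp
    rw [Real.dist_eq, hmain, abs_div, abs_of_pos hp, abs_mul, abs_of_pos hlam]
    have : lam * |J| ≤ lam * (δ / 2 * ((x - a) ^ lam / lam)) := by
      exact mul_le_mul_of_nonneg_left hJb (le_of_lt hlam)
    have h2 : lam * (δ / 2 * ((x - a) ^ lam / lam)) = δ / 2 * (x - a) ^ lam := by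
      field_simp
    calc lam * |J| / (x - a) ^ lam ≤ δ / 2 * (x - a) ^ lam / (x - a) ^ lam := by
          rw [← h2]; gcongr
      _ = δ / 2 := by field_simp
      _ < δ := by linarith
  refine ⟨h1, ?_⟩
  -- second limit
  have hp0 : Tendsto (fun x => (x - a) ^ lam) (nhdsWithin a (Set.Ioi a)) (nhds 0) := by
    have h0 : Tendsto (fun x : ℝ => x - a) (nhdsWithin a (Set.Ioi a)) (nhds 0) := by
      have : Tendsto (fun x : ℝ => x - a) (nhds a) (nhds 0) := by
        simpa using (continuous_sub_right a).tendsto a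
      exact this.mono_left nhdsWithin_le_nhds
    have hc : ContinuousAt (fun t : ℝ => t ^ lam) 0 :=
      Real.continuousAt_rpow_const 0 lam (Or.inr (le_of_lt hlam))
    have := hc.tendsto.comp h0
    rwa [Real.zero_rpow (ne_of_gt hlam)] at this
  have hmul : Tendsto (fun x =>
      (Real.Gamma (lam + 1) *
          ((1 / Real.Gamma lam) * ∫ y in a..x, (x - y) ^ (lam - 1) * f y) / (x - a) ^ lam)
        * (x - a) ^ lam / Real.Gamma (lam + 1))
      (nhdsWithin a (Set.Ioi a)) (nhds 0) := by
    have := (h1.mul hp0).div_const (Real.Gamma (lam + 1))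
    simpa using this
  refine hmul.congr' ?_
  filter_upwards [self_mem_nhdsWithin] with x hx
  simp only [Set.mem_Ioi] at hx
  have hpne : ((x:ℝ) - a) ^ lam ≠ 0 := ne_of_gt (Real.rpow_pos_of_pos (by linarith) _)
  field_simp
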